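/- Let μ be a positive Borel measure on ℂ such that limsup_{r→0} μ(B(x,r))/r < ∞ for μ-a.e. x (non-uniform linear growth), normalized so μ(ℂ) = 1. Let H_M be the union of all M-non-Ahlfors disks, i.e., all B(x,R) with x ∈ supp μ and μ(B(x,R)) ≥ M R. Then μ(H_M) → 0 as M → ∞. -/

import Mathlib

open MeasureTheory Metric Filter Set

/-- Let `μ` be a probability measure on `ℂ` with non-uniform linear growth:
for `μ`-a.e. `x`, `limsup_{r→0} μ(B(x,r))/r < ∞`. Let `H_M` be the union of all
`M`-non-Ahlfors disks, i.e. all `B(x,R)` with `x` in the support of `μ`, `R > 0` and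
`μ(B(x,R)) ≥ M R`. Then `μ(H_M) → 0` as `M → ∞`. -/
theorem nonAhlfors_union_tendsto_zero
    (μ : Measure ℂ) [IsProbabilityMeasure μ]
    (hgrowth : ∀ᵐ x ∂μ,
      Filter.limsup (fun r : ℝ => μ (closedBall x r) / ENNReal.ofReal r)
        (nhdsWithin 0 (Set.Ioi 0)) < ⊤) :
    Tendsto
      (fun M : ℝ =>
        μ {y : ℂ | ∃ x : ℂ, (∀ ε > (0:ℝ), μ (closedBall x ε) ≠ 0) ∧
            ∃ R > (0:ℝ), ENNReal.ofReal (M * R) ≤ μ (closedBall x R) ∧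
              y ∈ closedBall x R})
      atTop (nhds 0) := by
  -- the enlarged open sets
  set U : ℕ → Set ℂ := fun n =>
    {y | ∃ x R, 0 < R ∧ ENNReal.ofReal (n * R) ≤ μ (closedBall x R) ∧
      y ∈ ball x (2 * R)} with hUdef
  have hopen : ∀ n, IsOpen (U n) := by
    intro n
    rw [Metric.isOpen_iff]
    rintro y ⟨x, R, hR, hle, hy⟩
    refine ⟨2 * R - dist y x, by simpa [sub_pos] using hy, ?_⟩
    intro z hz
    refine ⟨x, R, hR, hle, ?_⟩
    have : dist z x ≤ dist z y + dist y x := dist_triangle z y x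
    simp only [mem_ball] at hz ⊢
    linarith
  have hanti : Antitone U := by
    intro n m hnm y ⟨x, R, hR, hle, hy⟩
    refine ⟨x, R, hR, le_trans (ENNReal.ofReal_le_ofReal ?_) hle, hy⟩
    have : (n : ℝ) ≤ m := Nat.cast_le.2 hnm
    nlinarith
  -- a.e. every point is eventually outside all `U n`
  have hae : ∀ᵐ y ∂μ, ∃ n : ℕ, y ∉ U n := by
    filter_upwards [hgrowth] with y hy
    obtain ⟨C, hC1, hC2⟩ := exists_between hy
    have hCne : C ≠ ⊤ := hC2.ne
    have hev := Filter.eventually_lt_of_limsup_lt hC1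
    rw [eventually_nhdsWithin_iff, Metric.eventually_nhds_iff] at hev
    obtain ⟨δ, hδ, hδev⟩ := hev
    obtain ⟨n, hn⟩ := exists_nat_gt (max (3 * C.toReal) (3 / δ))
    have hn3C : 3 * C.toReal < (n : ℝ) := lt_of_le_of_lt (le_max_left _ _) hn
    have hn3δ : 3 / δ < (n : ℝ) := lt_of_le_of_lt (le_max_right _ _) hn
    have hnpos : (0:ℝ) < n := lt_of_le_of_lt (le_max_of_le_right (by positivity)) hn
    refine ⟨n, ?_⟩
    rintro ⟨x, R, hR, hle, hyx⟩
    -- R ≤ 1/n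
    have hRn : (n : ℝ) * R ≤ 1 := by
      by_contra h
      push_neg at h
      have h1 : (1 : ENNReal) < ENNReal.ofReal ((n:ℝ) * R) := by
        rw [← ENNReal.ofReal_one]
        exact (ENNReal.ofReal_lt_ofReal_iff_of_nonneg zero_le_one).2 h
      exact absurd (le_trans hle prob_le_one) (not_le.2 h1)
    have hR3δ : 3 * R < δ := by
      have h1 : R ≤ 1 / n := by
        rw [le_div_iff₀ hnpos]; linarith [hRn]
      have h2 : 3 / (n:ℝ) < δ := by
        rw [div_lt_iff₀ hnpos]
        rw [div_lt_iff₀ hδ] at hn3δ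
        linarith
      calc 3 * R ≤ 3 * (1 / n) := by linarith
        _ = 3 / n := by ring
        _ < δ := h2
    -- closedBall x R ⊆ closedBall y (3R)
    have hsub : closedBall x R ⊆ closedBall y (3 * R) := by
      intro z hz
      simp only [mem_closedBall] at hz ⊢
      have h1 : dist z y ≤ dist z x + dist x y := dist_triangle z x y
      have h2 : dist x y < 2 * R := by rw [dist_comm]; exact mem_ball.1 hyx
      linarith
    have hkey : ENNReal.ofReal ((n:ℝ) * R) ≤ μ (closedBall y (3 * R)) :=
      le_trans hle (measure_mono hsub)
    have hsmall : μ (closedBall y (3 * R)) / ENNReal.ofReal (3 * R) < C := by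
      apply hδev
      · simp only [Real.dist_eq, sub_zero]
        rw [abs_of_pos (by linarith)]
        exact hR3δ
      · exact mem_Ioi.2 (by linarith)
    have h3Rpos : (0:ℝ) < 3 * R := by linarith
    have hlt : μ (closedBall y (3 * R)) < C * ENNReal.ofReal (3 * R) := by
      rwa [ENNReal.div_lt_iff (Or.inl (by simp [ENNReal.ofReal_pos.2 h3Rpos, ne_of_gt, hR]))
        (Or.inl ENNReal.ofReal_ne_top)] at hsmall
    have hfin : ENNReal.ofReal ((n:ℝ) * R) < ENNReal.ofReal (C.toReal * (3 * R)) := by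
      calc ENNReal.ofReal ((n:ℝ) * R) ≤ μ (closedBall y (3 * R)) := hkey
        _ < C * ENNReal.ofReal (3 * R) := hlt
        _ = ENNReal.ofReal (C.toReal * (3 * R)) := by
            rw [ENNReal.ofReal_mul ENNReal.toReal_nonneg, ENNReal.ofReal_toReal hCne]
    have : (n:ℝ) * R < C.toReal * (3 * R) := (ENNReal.ofReal_lt_ofReal_iff_of_nonneg
      (by positivity)).1 hfin
    nlinarith
  -- μ(⋂ U n) = 0
  have hiInter : μ (⋂ n, U n) = 0 := by
    refine measure_mono_null ?_ (ae_iff.1 hae)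
    intro y hy
    simp only [mem_iInter] at hy
    simp only [mem_setOf_eq, not_exists, not_not]
    exact fun n => hy n
  have hlim : Tendsto (fun n => μ (U n)) atTop (nhds 0) := by
    have := tendsto_measure_iInter_atTop (μ := μ)
      (fun n => (hopen n).measurableSet.nullMeasurableSet) hanti ⟨0, measure_ne_top μ _⟩
    rwa [hiInter] at this
  -- squeeze
  have hfloor : Tendsto (fun M : ℝ => μ (U ⌊M⌋₊)) atTop (nhds 0) :=
    hlim.comp tendsto_nat_floor_atTop
  refine tendsto_of_tendsto_of_tendsto_of_le_of_le' tendsto_const_nhds hfloor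
    (Eventually.of_forall fun M => zero_le) ?_
  filter_upwards [eventually_ge_atTop (0:ℝ)] with M hM
  apply measure_mono
  rintro y ⟨x, _hx, R, hR, hle, hy⟩
  refine ⟨x, R, hR, le_trans (ENNReal.ofReal_le_ofReal ?_) hle, ?_⟩
  · have : (⌊M⌋₊ : ℝ) ≤ M := Nat.floor_le hM
    nlinarith
  · exact mem_ball.2 (lt_of_le_of_lt (mem_closedBall.1 hy) (by linarith))
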